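/- In a quasi Gelfand triple (H₊, H₀, H₋), one has D₊ + D₋ = H₀: every x ∈ H₀ decomposes as x = g + ι₊ι₊*g for some g ∈ dom(ι₊ι₊*) ⊆ D₋, with ι₊ι₊*g ∈ D₊. -/

import Mathlib

open Filter Topology
open scoped ComplexInnerProductSpace

noncomputable section

/-- A quasi Gelfand triple `(H₊, H₀, H₋)`, encoded by the two embeddings
`ι₊ : D₊ ⊆ H₊ → H₀` and `ι₋ : D₋ ⊆ H₋ → H₀`: both are injective, closed, densely defined
with dense ranges, and the `H₋`-norm of an element of `D₋` equals the `H₊`-norm of its image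
under the adjoint `ι₊*` (which exactly says that `H₋` completes `D₋` under
`‖g‖₋ = sup_{f ∈ D₊} |⟨g, f⟩₀|/‖f‖₊`); moreover `ran ι₋` is all of `dom ι₊*`. -/
structure QuasiGelfandTriple (Hp H₀ Hm : Type*)
    [NormedAddCommGroup Hp] [InnerProductSpace ℂ Hp] [CompleteSpace Hp]
    [NormedAddCommGroup H₀] [InnerProductSpace ℂ H₀] [CompleteSpace H₀]
    [NormedAddCommGroup Hm] [InnerProductSpace ℂ Hm] [CompleteSpace Hm] where
  ip : Hp →ₗ.[ℂ] H₀
  im : Hm →ₗ.[ℂ] H₀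
  ip_dense_dom : Dense (ip.domain : Set Hp)
  im_dense_dom : Dense (im.domain : Set Hm)
  ip_closed : IsClosed {p : Hp × H₀ | ∃ f : ip.domain, (f : Hp) = p.1 ∧ ip f = p.2}
  im_closed : IsClosed {p : Hm × H₀ | ∃ g : im.domain, (g : Hm) = p.1 ∧ im g = p.2}
  ip_injective : ∀ f : ip.domain, ip f = 0 → (f : Hp) = 0
  im_injective : ∀ g : im.domain, im g = 0 → (g : Hm) = 0
  ip_dense_ran : Dense (Set.range fun f : ip.domain => ip f)
  im_dense_ran : Dense (Set.range fun g : im.domain => im g)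
  riesz : ∀ g : im.domain, ∃ v : Hp,
    (∀ f : ip.domain, ⟪im g, ip f⟫ = ⟪v, (f : Hp)⟫) ∧ ‖v‖ = ‖(g : Hm)‖
  ran_im : ∀ (u : H₀) (v : Hp),
    (∀ f : ip.domain, ⟪u, ip f⟫ = ⟪v, (f : Hp)⟫) → ∃ g : im.domain, im g = u

/-- In a quasi Gelfand triple `(H₊, H₀, H₋)` one has `D₊ + D₋ = H₀`:
every `x ∈ H₀` decomposes as `x = g + ι₊ι₊*g` with `g ∈ dom(ι₊ι₊*) ⊆ D₋` (here `v = ι₊*g` is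
characterized by `⟨g, ι₊f⟩₀ = ⟨v, f⟩₊` for all `f ∈ D₊`, and `v ∈ D₊`). -/
theorem stmt15 {Hp H₀ Hm : Type*}
    [NormedAddCommGroup Hp] [InnerProductSpace ℂ Hp] [CompleteSpace Hp]
    [NormedAddCommGroup H₀] [InnerProductSpace ℂ H₀] [CompleteSpace H₀]
    [NormedAddCommGroup Hm] [InnerProductSpace ℂ Hm] [CompleteSpace Hm]
    (Q : QuasiGelfandTriple Hp H₀ Hm) :
    ∀ x : H₀, ∃ (g : Q.im.domain) (v : Hp) (hv : v ∈ Q.ip.domain),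
      (∀ f : Q.ip.domain, ⟪Q.im g, Q.ip f⟫ = ⟪v, (f : Hp)⟫) ∧
      Q.im g + Q.ip ⟨v, hv⟩ = x := by
  intro x
  classical
  set L : Q.ip.domain →ₗ[ℂ] H₀ × Hp :=
    Q.ip.toFun.prod (-(Q.ip.domain.subtype)) with hL
  set L' : Q.ip.domain →ₗ[ℂ] WithLp 2 (H₀ × Hp) :=
    (WithLp.linearEquiv 2 ℂ (H₀ × Hp)).symm.toLinearMap ∘ₗ L with hL'
  set W : Submodule ℂ (WithLp 2 (H₀ × Hp)) := LinearMap.range L' with hW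
  have hL'app : ∀ f : Q.ip.domain,
      L' f = (WithLp.equiv 2 (H₀ × Hp)).symm (Q.ip f, -(f : Hp)) := fun f => rfl
  have hWmem : ∀ p : WithLp 2 (H₀ × Hp), p ∈ W ↔
      ∃ f : Q.ip.domain, Q.ip f = p.fst ∧ -(f : Hp) = p.snd := by
    intro p
    simp only [hW, LinearMap.mem_range]
    constructor
    · rintro ⟨f, rfl⟩
      exact ⟨f, rfl, rfl⟩
    · rintro ⟨f, h1, h2⟩
      refine ⟨f, ?_⟩
      rw [hL'app]
      exact congrArg _ (Prod.ext h1 h2)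
  have hWset : (W : Set (WithLp 2 (H₀ × Hp))) =
      ((fun p : H₀ × Hp => (-p.2, p.1)) ∘
        (WithLp.prodContinuousLinearEquiv 2 ℂ H₀ Hp)) ⁻¹'
        {p : Hp × H₀ | ∃ f : Q.ip.domain, (f : Hp) = p.1 ∧ Q.ip f = p.2} := by
    ext p
    simp only [SetLike.mem_coe, Set.mem_preimage, Set.mem_setOf_eq, hWmem,
      Function.comp_apply, WithLp.prodContinuousLinearEquiv_apply]
    constructor
    · rintro ⟨f, h1, h2⟩
      refine ⟨f, ?_, h1⟩
      show (f : Hp) = -p.snd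
      rw [← h2, neg_neg]
    · rintro ⟨f, h1, h2⟩
      refine ⟨f, h2, ?_⟩
      have h1' : (f : Hp) = -p.snd := h1
      rw [h1', neg_neg]
  have hWclosed : IsClosed (W : Set (WithLp 2 (H₀ × Hp))) := by
    rw [hWset]
    exact Q.ip_closed.preimage
      ((Continuous.prodMk (continuous_snd.neg) continuous_fst).comp
        (WithLp.prodContinuousLinearEquiv 2 ℂ H₀ Hp).continuous)
  haveI : CompleteSpace W := hWclosed.completeSpace_coe
  obtain ⟨y, hy, z, hz, hxz⟩ :=
    W.exists_add_mem_mem_orthogonal ((WithLp.equiv 2 (H₀ × Hp)).symm (x, 0))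
  obtain ⟨f, rfl⟩ := hy
  have hx1 : x = Q.ip f + z.fst := congrArg WithLp.fst hxz
  have hx2 : (0 : Hp) = -(f : Hp) + z.snd := congrArg WithLp.snd hxz
  have hz2 : z.snd = (f : Hp) := by
    have h := hx2.symm
    rw [neg_add_eq_zero] at h
    exact h.symm
  have horth : ∀ f' : Q.ip.domain, ⟪z.fst, Q.ip f'⟫ = ⟪z.snd, (f' : Hp)⟫ := by
    intro f'
    have h0 : (inner ℂ (L' f') z : ℂ) = 0 :=
      (Submodule.mem_orthogonal W z).mp hz _ ⟨f', rfl⟩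
    rw [WithLp.prod_inner_apply] at h0
    have h0' : (inner ℂ (Q.ip f') z.fst + inner ℂ (-(f' : Hp)) z.snd : ℂ) = 0 := h0
    rw [inner_neg_left] at h0'
    have heq : ⟪Q.ip f', z.fst⟫ = ⟪(f' : Hp), z.snd⟫ := by linear_combination h0'
    calc ⟪z.fst, Q.ip f'⟫ = starRingEnd ℂ ⟪Q.ip f', z.fst⟫ := (inner_conj_symm _ _).symm
      _ = starRingEnd ℂ ⟪(f' : Hp), z.snd⟫ := by rw [heq]
      _ = ⟪z.snd, (f' : Hp)⟫ := inner_conj_symm _ _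
  obtain ⟨g, hg⟩ := Q.ran_im z.fst z.snd horth
  have hv : z.snd ∈ Q.ip.domain := hz2 ▸ f.2
  refine ⟨g, z.snd, hv, by rw [hg]; exact horth, ?_⟩
  have hfe : (⟨z.snd, hv⟩ : Q.ip.domain) = f := Subtype.ext hz2
  rw [hg, hfe, hx1]
  abel
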